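/- Rotational projection reduction for homogeneous viscosity: Let Ω ⊆ ℝ^d be open, let ν ∈ ℝ be a constant, and let ũ, u : ℝ^d → ℝ^d be three times continuously differentiable vector fields with ∇·u = 0 at every point of Ω. Then the scalar field ψ := −2ν(∇·ũ) satisfies, at every point of Ω: Δψ = − Σ_{i,j} ∂_i ∂_j ( 2ν D(ũ − u)_{ij} ). In other words, for a homogeneous viscosity the solution of the shear-rate correction Poisson problem is given explicitly by ψ = −2ν ∇·ũ, recovering the rotational incremental pressure-correction scheme. -/

import Mathlib

/-- Partial derivative `∂_j g` of a scalar field on `ℝ^d`. -/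
noncomputable def pdiff {d : ℕ} (j : Fin d) (g : (Fin d → ℝ) → ℝ) (x : Fin d → ℝ) : ℝ :=
  fderiv ℝ g x (Pi.single j 1)

/-- Shear-rate tensor `D(v)_{ij} = (∂_j v_i + ∂_i v_j)/2` of a vector field. -/
noncomputable def shearD {d : ℕ} (v : (Fin d → ℝ) → (Fin d → ℝ)) (i j : Fin d)
    (x : Fin d → ℝ) : ℝ :=
  (pdiff j (fun y => v y i) x + pdiff i (fun y => v y j) x) / 2

section Aux

variable {d : ℕ}

lemma pdiff_congr {j : Fin d} {f g : (Fin d → ℝ) → ℝ} {x : Fin d → ℝ}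
    (h : ∀ y, f y = g y) : pdiff j f x = pdiff j g x := by
  rw [funext h]

lemma contDiff_pdiff {n : ℕ} (j : Fin d) {g : (Fin d → ℝ) → ℝ}
    (hg : ContDiff ℝ ((n : ℕ∞) + 1) g) : ContDiff ℝ (n : ℕ∞) (pdiff j g) := by
  have h1 : ContDiff ℝ (n : ℕ∞) (fderiv ℝ g) := hg.fderiv_right (by exact_mod_cast le_rfl)
  exact (ContinuousLinearMap.apply ℝ ℝ (Pi.single j 1)).contDiff.comp h1

lemma pdiff_const_mul (a : ℝ) {f : (Fin d → ℝ) → ℝ} (hf : Differentiable ℝ f)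
    (j : Fin d) (x : Fin d → ℝ) :
    pdiff j (fun y => a * f y) x = a * pdiff j f x := by
  unfold pdiff
  rw [fderiv_const_mul (hf x) a]
  simp

lemma pdiff_add {f g : (Fin d → ℝ) → ℝ} (hf : Differentiable ℝ f) (hg : Differentiable ℝ g)
    (j : Fin d) (x : Fin d → ℝ) :
    pdiff j (fun y => f y + g y) x = pdiff j f x + pdiff j g x := by
  unfold pdiff
  rw [fderiv_fun_add (hf x) (hg x)]
  simp

lemma pdiff_sub {f g : (Fin d → ℝ) → ℝ} (hf : Differentiable ℝ f) (hg : Differentiable ℝ g)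
    (j : Fin d) (x : Fin d → ℝ) :
    pdiff j (fun y => f y - g y) x = pdiff j f x - pdiff j g x := by
  unfold pdiff
  rw [fderiv_fun_sub (hf x) (hg x)]
  simp

lemma pdiff_sum {ι : Type*} [Fintype ι] {f : ι → (Fin d → ℝ) → ℝ}
    (hf : ∀ k, Differentiable ℝ (f k)) (j : Fin d) (x : Fin d → ℝ) :
    pdiff j (fun y => ∑ k, f k y) x = ∑ k, pdiff j (f k) x := by
  unfold pdiff
  rw [fderiv_fun_sum (fun k _ => (hf k) x)]
  simp

lemma pdiff_comb (a : ℝ) {f1 f2 f3 f4 : (Fin d → ℝ) → ℝ}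
    (h1 : Differentiable ℝ f1) (h2 : Differentiable ℝ f2)
    (h3 : Differentiable ℝ f3) (h4 : Differentiable ℝ f4)
    (j : Fin d) (x : Fin d → ℝ) :
    pdiff j (fun y => a * (f1 y + f2 y - f3 y - f4 y)) x
      = a * (pdiff j f1 x + pdiff j f2 x - pdiff j f3 x - pdiff j f4 x) := by
  rw [pdiff_const_mul a (f := fun y => f1 y + f2 y - f3 y - f4 y) (((h1.add h2).sub h3).sub h4),
    pdiff_sub (f := fun y => f1 y + f2 y - f3 y) ((h1.add h2).sub h3) h4,
    pdiff_sub (f := fun y => f1 y + f2 y) (h1.add h2) h3, pdiff_add h1 h2]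

lemma pdiff_comm {f : (Fin d → ℝ) → ℝ} (hf : ContDiff ℝ 2 f) (i j : Fin d) (x : Fin d → ℝ) :
    pdiff i (pdiff j f) x = pdiff j (pdiff i f) x := by
  have hsymm : IsSymmSndFDerivAt ℝ f x := hf.contDiffAt.isSymmSndFDerivAt (by simp)
  have hdf : DifferentiableAt ℝ (fderiv ℝ f) x := by
    have : ContDiff ℝ (1 : ℕ∞) (fderiv ℝ f) := hf.fderiv_right (by norm_num)
    exact (this.differentiable (by norm_num)) x
  have key : ∀ v : Fin d → ℝ,
      fderiv ℝ (fun y => fderiv ℝ f y v) x = (fderiv ℝ (fderiv ℝ f) x).flip v := by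
    intro v
    have h := fderiv_clm_apply hdf (differentiableAt_const v)
    simpa using h
  unfold pdiff
  rw [key, key]
  simpa using hsymm.eq (Pi.single i 1) (Pi.single j 1)

lemma pdiff_zero_of_eventually {g : (Fin d → ℝ) → ℝ} {x : Fin d → ℝ} (j : Fin d)
    (hg : g =ᶠ[nhds x] fun _ => (0 : ℝ)) : pdiff j g x = 0 := by
  unfold pdiff
  rw [hg.fderiv_eq]
  simp

end Aux

/-- Rotational projection reduction for homogeneous viscosity: if `∇·u = 0` on the
open set `Ω`, then `ψ := −2ν (∇·ũ)` satisfies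
`Δψ = − Σ_{i,j} ∂_i ∂_j (2ν D(ũ − u)_{ij})` on `Ω`, recovering the rotational
incremental pressure-correction scheme. -/
theorem rotational_projection_reduction
    (d : ℕ) (Ω : Set (Fin d → ℝ)) (hΩ : IsOpen Ω) (ν : ℝ)
    (ut u : (Fin d → ℝ) → (Fin d → ℝ))
    (hut : ContDiff ℝ 3 ut) (hu : ContDiff ℝ 3 u)
    (hdiv : ∀ x ∈ Ω, (∑ i, pdiff i (fun y => u y i) x) = 0) :
    ∀ x ∈ Ω,
      (∑ i, pdiff i (fun y =>
          pdiff i (fun z => -(2 * ν) * (∑ k, pdiff k (fun w => ut w k) z)) y) x)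
        = -(∑ i, ∑ j, pdiff i (fun y =>
            pdiff j (fun z => 2 * ν * shearD (fun w => ut w - u w) i j z) y) x) := by
  intro x hx
  -- regularity of components
  have hVc : ∀ b, ContDiff ℝ 3 (fun y => ut y b) := fun b => contDiff_pi.mp hut b
  have hWc : ∀ b, ContDiff ℝ 3 (fun y => u y b) := fun b => contDiff_pi.mp hu b
  have hVd : ∀ b, Differentiable ℝ (fun y => ut y b) :=
    fun b => (hVc b).differentiable (by norm_num)
  have hWd : ∀ b, Differentiable ℝ (fun y => u y b) :=
    fun b => (hWc b).differentiable (by norm_num)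
  have hpV2 : ∀ (a b : Fin d), ContDiff ℝ 2 (pdiff a (fun y => ut y b)) := by
    intro a b
    exact_mod_cast contDiff_pdiff (n := 2) a (by exact_mod_cast hVc b)
  have hpW2 : ∀ (a b : Fin d), ContDiff ℝ 2 (pdiff a (fun y => u y b)) := by
    intro a b
    exact_mod_cast contDiff_pdiff (n := 2) a (by exact_mod_cast hWc b)
  have hpV1 : ∀ (a b k : Fin d), ContDiff ℝ 1 (pdiff a (pdiff b (fun y => ut y k))) := by
    intro a b k
    exact_mod_cast contDiff_pdiff (n := 1) a (by exact_mod_cast hpV2 b k)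
  have hpW1 : ∀ (a b k : Fin d), ContDiff ℝ 1 (pdiff a (pdiff b (fun y => u y k))) := by
    intro a b k
    exact_mod_cast contDiff_pdiff (n := 1) a (by exact_mod_cast hpW2 b k)
  have hdV2 : ∀ (a b : Fin d), Differentiable ℝ (pdiff a (fun y => ut y b)) :=
    fun a b => (hpV2 a b).differentiable (by norm_num)
  have hdW2 : ∀ (a b : Fin d), Differentiable ℝ (pdiff a (fun y => u y b)) :=
    fun a b => (hpW2 a b).differentiable (by norm_num)
  have hdV1 : ∀ (a b k : Fin d), Differentiable ℝ (pdiff a (pdiff b (fun y => ut y k))) :=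
    fun a b k => (hpV1 a b k).differentiable (by norm_num)
  have hdW1 : ∀ (a b k : Fin d), Differentiable ℝ (pdiff a (pdiff b (fun y => u y k))) :=
    fun a b k => (hpW1 a b k).differentiable (by norm_num)
  -- function-level commutation of the two inner partials
  have comm2V : ∀ (a b k : Fin d),
      pdiff a (pdiff b (fun y => ut y k)) = pdiff b (pdiff a (fun y => ut y k)) :=
    fun a b k => funext fun y => pdiff_comm ((hVc k).of_le (by norm_num)) a b y
  have comm2W : ∀ (a b k : Fin d),
      pdiff a (pdiff b (fun y => u y k)) = pdiff b (pdiff a (fun y => u y k)) :=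
    fun a b k => funext fun y => pdiff_comm ((hWc k).of_le (by norm_num)) a b y
  -- abbreviation for the common value
  set S : ℝ := ∑ i, ∑ j, pdiff i (pdiff i (pdiff j (fun y => ut y j))) x with hS
  -- Left-hand side
  have hL : (∑ i, pdiff i (fun y =>
        pdiff i (fun z => -(2 * ν) * (∑ k, pdiff k (fun w => ut w k) z)) y) x)
      = -(2 * ν) * S := by
    rw [hS, Finset.mul_sum]
    apply Finset.sum_congr rfl
    intro i _
    have hsumd : Differentiable ℝ (fun z => ∑ k, pdiff k (fun w => ut w k) z) :=
      Differentiable.fun_sum (fun k _ => hdV2 k k)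
    have step1 : ∀ y, pdiff i (fun z => -(2 * ν) * (∑ k, pdiff k (fun w => ut w k) z)) y
        = -(2 * ν) * (∑ k, pdiff i (pdiff k (fun w => ut w k)) y) := by
      intro y
      rw [pdiff_const_mul (-(2 * ν)) hsumd i y]
      congr 1
      exact pdiff_sum (fun k => hdV2 k k) i y
    calc pdiff i (fun y =>
          pdiff i (fun z => -(2 * ν) * (∑ k, pdiff k (fun w => ut w k) z)) y) x
        = pdiff i (fun y => -(2 * ν) * (∑ k, pdiff i (pdiff k (fun w => ut w k)) y)) x :=
          pdiff_congr step1
      _ = -(2 * ν) * pdiff i (fun y => ∑ k, pdiff i (pdiff k (fun w => ut w k)) y) x :=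
          pdiff_const_mul (-(2 * ν)) (Differentiable.fun_sum (fun k _ => hdV1 i k k)) i x
      _ = -(2 * ν) * ∑ k, pdiff i (pdiff i (pdiff k (fun w => ut w k))) x := by
          rw [pdiff_sum (fun k => hdV1 i k k) i x]
  -- Right-hand side: expand each summand
  have hR : ∀ i j : Fin d,
      pdiff i (fun y => pdiff j (fun z => 2 * ν * shearD (fun w => ut w - u w) i j z) y) x
        = ν * (pdiff i (pdiff j (pdiff j (fun y => ut y i))) x
            + pdiff i (pdiff j (pdiff i (fun y => ut y j))) x
            - pdiff i (pdiff j (pdiff j (fun y => u y i))) x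
            - pdiff i (pdiff j (pdiff i (fun y => u y j))) x) := by
    intro i j
    have e1 : ∀ z, pdiff j (fun y => (ut y - u y) i) z
        = pdiff j (fun y => ut y i) z - pdiff j (fun y => u y i) z :=
      fun z => pdiff_sub (hVd i) (hWd i) j z
    have e2 : ∀ z, pdiff i (fun y => (ut y - u y) j) z
        = pdiff i (fun y => ut y j) z - pdiff i (fun y => u y j) z :=
      fun z => pdiff_sub (hVd j) (hWd j) i z
    have s1 : ∀ z, 2 * ν * shearD (fun w => ut w - u w) i j z
        = ν * (pdiff j (fun y => ut y i) z + pdiff i (fun y => ut y j) z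
            - pdiff j (fun y => u y i) z - pdiff i (fun y => u y j) z) := by
      intro z
      calc 2 * ν * shearD (fun w => ut w - u w) i j z
          = 2 * ν * ((pdiff j (fun y => (ut y - u y) i) z
              + pdiff i (fun y => (ut y - u y) j) z) / 2) := rfl
        _ = _ := by rw [e1 z, e2 z]; ring
    have s2 : ∀ y, pdiff j (fun z => 2 * ν * shearD (fun w => ut w - u w) i j z) y
        = ν * (pdiff j (pdiff j (fun y => ut y i)) y
            + pdiff j (pdiff i (fun y => ut y j)) y
            - pdiff j (pdiff j (fun y => u y i)) y
            - pdiff j (pdiff i (fun y => u y j)) y) := by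
      intro y
      exact (pdiff_congr s1).trans
        (pdiff_comb ν (hdV2 j i) (hdV2 i j) (hdW2 j i) (hdW2 i j) j y)
    exact (pdiff_congr s2).trans
      (pdiff_comb ν (hdV1 j j i) (hdV1 j i j) (hdW1 j j i) (hdW1 j i j) i x)
  -- Identity (A): ∑ᵢⱼ ∂ᵢ∂ⱼ∂ⱼ Vᵢ = S
  have hA : (∑ i, ∑ j, pdiff i (pdiff j (pdiff j (fun y => ut y i))) x) = S := by
    rw [Finset.sum_comm, hS]
    apply Finset.sum_congr rfl; intro i _
    apply Finset.sum_congr rfl; intro j _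
    calc pdiff j (pdiff i (pdiff i (fun y => ut y j))) x
        = pdiff i (pdiff j (pdiff i (fun y => ut y j))) x :=
          pdiff_comm (hpV2 i j) j i x
      _ = pdiff i (pdiff i (pdiff j (fun y => ut y j))) x := by rw [comm2V j i j]
  -- Identity (B): ∑ᵢⱼ ∂ᵢ∂ⱼ∂ᵢ Vⱼ = S
  have hB : (∑ i, ∑ j, pdiff i (pdiff j (pdiff i (fun y => ut y j))) x) = S := by
    rw [hS]
    apply Finset.sum_congr rfl; intro i _
    apply Finset.sum_congr rfl; intro j _
    rw [comm2V j i j]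
  -- divergence-free facts for u
  have hg0 : ∀ y ∈ Ω, (fun y => ∑ j, pdiff j (fun w => u w j) y) y = (fun _ => (0:ℝ)) y :=
    fun y hy => hdiv y hy
  have hg1 : ∀ (a : Fin d), ∀ y ∈ Ω,
      pdiff a (fun y => ∑ j, pdiff j (fun w => u w j) y) y = 0 := by
    intro a y hy
    exact pdiff_zero_of_eventually a
      (Filter.eventuallyEq_of_mem (hΩ.mem_nhds hy) (fun z hz => hg0 z hz))
  have hg2 : ∀ (a : Fin d),
      pdiff a (pdiff a (fun y => ∑ j, pdiff j (fun w => u w j) y)) x = 0 := by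
    intro a
    exact pdiff_zero_of_eventually a
      (Filter.eventuallyEq_of_mem (hΩ.mem_nhds hx) (fun z hz => hg1 a z hz))
  -- Identity (C'): ∑ᵢⱼ ∂ᵢ∂ᵢ∂ⱼ Wⱼ = 0
  have hSW : (∑ i, ∑ j, pdiff i (pdiff i (pdiff j (fun y => u y j))) x) = 0 := by
    have : ∀ i : Fin d, (∑ j, pdiff i (pdiff i (pdiff j (fun y => u y j))) x)
        = pdiff i (pdiff i (fun y => ∑ j, pdiff j (fun w => u w j) y)) x := by
      intro i
      have t1 : ∀ y, pdiff i (fun z => ∑ j, pdiff j (fun w => u w j) z) y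
          = ∑ j, pdiff i (pdiff j (fun w => u w j)) y :=
        fun y => pdiff_sum (fun j => hdW2 j j) i y
      calc (∑ j, pdiff i (pdiff i (pdiff j (fun y => u y j))) x)
          = pdiff i (fun y => ∑ j, pdiff i (pdiff j (fun w => u w j)) y) x :=
            (pdiff_sum (fun j => hdW1 i j j) i x).symm
        _ = pdiff i (pdiff i (fun y => ∑ j, pdiff j (fun w => u w j) y)) x :=
            pdiff_congr (fun y => (t1 y).symm)
    rw [Finset.sum_congr rfl (fun i _ => this i)]
    exact Finset.sum_eq_zero (fun i _ => hg2 i)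
  -- Identity (C): ∑ᵢⱼ ∂ᵢ∂ⱼ∂ⱼ Wᵢ = 0
  have hC : (∑ i, ∑ j, pdiff i (pdiff j (pdiff j (fun y => u y i))) x) = 0 := by
    rw [← hSW, Finset.sum_comm]
    apply Finset.sum_congr rfl; intro i _
    apply Finset.sum_congr rfl; intro j _
    calc pdiff j (pdiff i (pdiff i (fun y => u y j))) x
        = pdiff i (pdiff j (pdiff i (fun y => u y j))) x :=
          pdiff_comm (hpW2 i j) j i x
      _ = pdiff i (pdiff i (pdiff j (fun y => u y j))) x := by rw [comm2W j i j]
  -- Identity (D): ∑ᵢⱼ ∂ᵢ∂ⱼ∂ᵢ Wⱼ = 0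
  have hD : (∑ i, ∑ j, pdiff i (pdiff j (pdiff i (fun y => u y j))) x) = 0 := by
    rw [← hSW]
    apply Finset.sum_congr rfl; intro i _
    apply Finset.sum_congr rfl; intro j _
    rw [comm2W j i j]
  -- put everything together
  rw [hL]
  have hRtot : (∑ i, ∑ j, pdiff i (fun y =>
        pdiff j (fun z => 2 * ν * shearD (fun w => ut w - u w) i j z) y) x)
      = ν * ((∑ i, ∑ j, pdiff i (pdiff j (pdiff j (fun y => ut y i))) x)
          + (∑ i, ∑ j, pdiff i (pdiff j (pdiff i (fun y => ut y j))) x)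
          - (∑ i, ∑ j, pdiff i (pdiff j (pdiff j (fun y => u y i))) x)
          - (∑ i, ∑ j, pdiff i (pdiff j (pdiff i (fun y => u y j))) x)) := by
    rw [Finset.sum_congr rfl (fun i _ => Finset.sum_congr rfl (fun j _ => hR i j))]
    simp only [← Finset.sum_add_distrib, ← Finset.sum_sub_distrib, Finset.mul_sum]
  rw [hRtot, hA, hB, hC, hD]
  ring
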